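/- Let Γ be a locally finite connected graph with basepoint v, let α be a distortion function and f a Floyd scaling function with ∑_{n} α(2n+1) f(n) < ∞. Then for every ε > 0 there exists r > 0 such that every α-distorted path γ : I → Γ with d(v, γ(I)) > r has Floyd length L_{f,v}(γ) < ε. (Generalized Karlsson Lemma.) -/

import Mathlib

open Filter Topology

/-- The vertex set of a locally finite connected graph, presented via its
graph metric `d` (an integer-valued geodesic metric with finite balls). -/
structure GraphDist (V : Type) where
  d : V → V → ℕ
  d_self : ∀ x, d x x = 0
  eq_of_d : ∀ x y, d x y = 0 → x = y
  d_symm : ∀ x y, d x y = d y x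
  d_tri : ∀ x y z, d x z ≤ d x y + d y z
  locallyFinite : ∀ (x : V) (n : ℕ), {y | d x y ≤ n}.Finite
  geodesic : ∀ x y, 0 < d x y → ∃ z, d x z = 1 ∧ d z y + 1 = d x y

namespace GraphDist

variable {V : Type} (G : GraphDist V)

/-- `γ : Fin (n+1) → V` is an edge path (consecutive vertices at distance `≤ 1`). -/
def IsPath {n : ℕ} (γ : Fin (n + 1) → V) : Prop :=
  ∀ i : Fin n, G.d (γ i.castSucc) (γ i.succ) ≤ 1

/-- Floyd length of a path with respect to the scaling function `f` and
basepoint `v`: the edge `{x,y}` has length `f (d v {x,y})`. -/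
def floydLen (f : ℕ → ℝ) (v : V) {n : ℕ} (γ : Fin (n + 1) → V) : ℝ :=
  ∑ i : Fin n, f (min (G.d v (γ i.castSucc)) (G.d v (γ i.succ)))

/-- Floyd distance: infimal Floyd length of edge paths joining two vertices. -/
noncomputable def floydDist (f : ℕ → ℝ) (v : V) (a b : V) : ℝ :=
  sInf {L | ∃ (n : ℕ) (γ : Fin (n + 1) → V), G.IsPath γ ∧ γ 0 = a ∧
    γ (Fin.last n) = b ∧ L = G.floydLen f v γ}

/-- A finite `c`-quasigeodesic path. -/
def IsQuasigeodesic (c : ℝ) {n : ℕ} (γ : Fin (n + 1) → V) : Prop :=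
  G.IsPath γ ∧ ∀ s t : Fin (n + 1),
    (1 / c) * |(s : ℝ) - (t : ℝ)| - c ≤ (G.d (γ s) (γ t) : ℝ) ∧
    (G.d (γ s) (γ t) : ℝ) ≤ c * |(s : ℝ) - (t : ℝ)| + c

/-- A `c`-quasigeodesic ray. -/
def IsQuasigeodesicRay (c : ℝ) (γ : ℕ → V) : Prop :=
  (∀ n : ℕ, G.d (γ n) (γ (n + 1)) ≤ 1) ∧ ∀ s t : ℕ,
    (1 / c) * |(s : ℝ) - (t : ℝ)| - c ≤ (G.d (γ s) (γ t) : ℝ) ∧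
    (G.d (γ s) (γ t) : ℝ) ≤ c * |(s : ℝ) - (t : ℝ)| + c

/-- A finite `α`-distorted (`α`-geodesic) path. -/
def IsAlphaPath (α : ℕ → ℝ) {n : ℕ} (γ : Fin (n + 1) → V) : Prop :=
  G.IsPath γ ∧ ∀ s t : Fin (n + 1),
    (G.d (γ s) (γ t) : ℝ) ≤ α (Nat.dist s t) ∧
    (Nat.dist (s : ℕ) (t : ℕ) : ℝ) ≤ α (G.d (γ s) (γ t))

/-- An `α`-geodesic ray. -/
def IsAlphaRay (α : ℕ → ℝ) (γ : ℕ → V) : Prop :=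
  (∀ n : ℕ, G.d (γ n) (γ (n + 1)) ≤ 1) ∧ ∀ s t : ℕ,
    (G.d (γ s) (γ t) : ℝ) ≤ α (Nat.dist s t) ∧
    (Nat.dist s t : ℝ) ≤ α (G.d (γ s) (γ t))

end GraphDist

/-- `f` is a Floyd scaling function with ratio constant `K`. -/
def IsFloydFunction (f : ℕ → ℝ) (K : ℝ) : Prop :=
  (∀ n, 0 < f n) ∧ (∀ n, 1 ≤ f n / f (n + 1) ∧ f n / f (n + 1) ≤ K) ∧ Summable f

/-- `α` is a distortion function: non-decreasing with `α n ≥ n`. -/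
def IsDistortion (α : ℕ → ℝ) : Prop :=
  (∀ n, 0 < α n) ∧ Monotone α ∧ ∀ n : ℕ, (n : ℝ) ≤ α n

private lemma karlsson_tail_bound (g : ℕ → ℝ) (hg : ∀ n, 0 ≤ g n) (hsum : Summable g)
    (r : ℕ) (T : Finset ℕ) (hT : ∀ m ∈ T, r ≤ m) :
    ∑ m ∈ T, g m ≤ ∑' k, g (k + r) := by
  have hsum' : Summable (fun k => g (k + r)) := (summable_nat_add_iff r).2 hsum
  have h1 : ∑ k ∈ T.image (· - r), g (k + r) = ∑ m ∈ T, g ((m - r) + r) := by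
    apply Finset.sum_image
    intro x hx y hy hxy
    have := hT x hx; have := hT y hy; simp only at hxy; omega
  have h2 : ∑ m ∈ T, g ((m - r) + r) = ∑ m ∈ T, g m :=
    Finset.sum_congr rfl (fun m hm => by rw [Nat.sub_add_cancel (hT m hm)])
  rw [← h2, ← h1]
  exact Summable.sum_le_tsum _ (fun k _ => hg _) hsum'

/-- Generalized Karlsson Lemma: if `∑ α(2n+1) f(n) < ∞`, then for
every `ε > 0` there is `r` such that every `α`-distorted path staying at graph
distance `> r` from the basepoint has Floyd length `< ε`. -/
theorem stmt4 {V : Type} (G : GraphDist V) (v : V)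
    (f : ℕ → ℝ) (K : ℝ) (hK : 0 < K) (hfpos : ∀ n, 0 < f n)
    (hratio : ∀ n, 1 ≤ f n / f (n + 1) ∧ f n / f (n + 1) ≤ K)
    (α : ℕ → ℝ) (hα : IsDistortion α)
    (hadm : Summable (fun n => α (2 * n + 1) * f n)) :
    ∀ ε : ℝ, 0 < ε → ∃ r : ℕ, ∀ (n : ℕ) (γ : Fin (n + 1) → V),
      G.IsAlphaPath α γ → (∀ i, r < G.d v (γ i)) →
      G.floydLen f v γ < ε := by
  intro ε hε
  set g : ℕ → ℝ := fun n => α (2 * n + 1) * f n with hg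
  have hgpos : ∀ n, 0 ≤ g n := fun n => le_of_lt (mul_pos (hα.1 _) (hfpos n))
  have htail : Filter.Tendsto (fun i => ∑' k, g (k + i)) Filter.atTop (nhds 0) :=
    tendsto_sum_nat_add g
  obtain ⟨r, hr⟩ : ∃ r, ∑' k, g (k + r) < ε / 3 :=
    (htail.eventually (gt_mem_nhds (show (0:ℝ) < ε / 3 by linarith))).exists
  refine ⟨r, ?_⟩
  intro n γ hγ hfar
  obtain ⟨hpath, hdist⟩ := hγ
  set lev : Fin n → ℕ := fun i => min (G.d v (γ i.castSucc)) (G.d v (γ i.succ)) with hlev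
  have key : ∀ m : ℕ,
      (((Finset.univ.filter (fun i : Fin n => lev i = m)).card : ℝ)) ≤ α (2 * m) + 2 := by
    intro m
    set S := Finset.univ.filter (fun i : Fin n => lev i = m) with hS
    rcases S.eq_empty_or_nonempty with h | h
    · rw [h]
      simp only [Finset.card_empty, Nat.cast_zero]
      have := hα.1 (2 * m)
      linarith
    · have hsel : ∀ i ∈ S, ∃ s : Fin (n + 1),
          G.d v (γ s) = m ∧ ((s : ℕ) = (i : ℕ) ∨ (s : ℕ) = (i : ℕ) + 1) := by
        intro i hi
        have hm : lev i = m := (Finset.mem_filter.mp hi).2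
        by_cases hc : G.d v (γ i.castSucc) ≤ G.d v (γ i.succ)
        · refine ⟨i.castSucc, ?_, Or.inl (Fin.coe_castSucc i)⟩
          rw [← hm]; exact (min_eq_left hc).symm
        · refine ⟨i.succ, ?_, Or.inr (Fin.val_succ i)⟩
          rw [← hm]; exact (min_eq_right (le_of_not_ge hc)).symm
      choose s hs1 hs2 using hsel
      have hdij : ∀ i, ∀ hi : i ∈ S, ∀ j, ∀ hj : j ∈ S,
          (Nat.dist (i : ℕ) (j : ℕ) : ℝ) ≤ α (2 * m) + 1 := by
        intro i hi j hj
        have hdd : G.d (γ (s i hi)) (γ (s j hj)) ≤ 2 * m := by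
          calc G.d (γ (s i hi)) (γ (s j hj))
              ≤ G.d (γ (s i hi)) v + G.d v (γ (s j hj)) := G.d_tri _ _ _
            _ = m + m := by rw [G.d_symm, hs1, hs1]
            _ = 2 * m := by ring
        have h1 : (Nat.dist ((s i hi : ℕ)) ((s j hj : ℕ)) : ℝ)
            ≤ α (G.d (γ (s i hi)) (γ (s j hj))) := (hdist _ _).2
        have h2 : α (G.d (γ (s i hi)) (γ (s j hj))) ≤ α (2 * m) := hα.2.1 hdd
        have h3 : Nat.dist (i : ℕ) (j : ℕ) ≤ Nat.dist ((s i hi : ℕ)) ((s j hj : ℕ)) + 1 := by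
          have e1 := hs2 i hi; have e2 := hs2 j hj
          simp only [Nat.dist] at *
          omega
        calc (Nat.dist (i : ℕ) (j : ℕ) : ℝ)
            ≤ (Nat.dist ((s i hi : ℕ)) ((s j hj : ℕ)) : ℝ) + 1 := by exact_mod_cast h3
          _ ≤ α (2 * m) + 1 := by linarith
      have hmaxmem := S.max'_mem h
      have hminmem := S.min'_mem h
      have hsub : S ⊆ Finset.Icc (S.min' h) (S.max' h) :=
        fun i hi => Finset.mem_Icc.mpr ⟨S.min'_le i hi, S.le_max' i hi⟩
      have hc1 : S.card ≤ ((S.max' h : ℕ)) + 1 - ((S.min' h : ℕ)) := by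
        have := Finset.card_le_card hsub
        rwa [Fin.card_Icc] at this
      have hle : ((S.min' h : ℕ)) ≤ ((S.max' h : ℕ)) := S.min'_le _ hmaxmem
      have hc2 : S.card ≤ Nat.dist ((S.max' h : ℕ)) ((S.min' h : ℕ)) + 1 := by
        simp only [Nat.dist] at *
        omega
      have hd := hdij _ hmaxmem _ hminmem
      calc (S.card : ℝ) ≤ (Nat.dist ((S.max' h : ℕ)) ((S.min' h : ℕ)) : ℝ) + 1 := by
            exact_mod_cast hc2
        _ ≤ α (2 * m) + 2 := by linarith
  have hterm : ∀ m ∈ Finset.image lev Finset.univ,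
      ((Finset.univ.filter (fun i : Fin n => lev i = m)).card) • f m ≤ 3 * g m := by
    intro m _
    rw [nsmul_eq_mul]
    have h1 := key m
    have hmono : α (2 * m) ≤ α (2 * m + 1) := hα.2.1 (by omega)
    have hge1 : (1 : ℝ) ≤ α (2 * m + 1) := by
      have := hα.2.2 (2 * m + 1)
      have : ((2 * m + 1 : ℕ) : ℝ) ≤ α (2 * m + 1) := this
      push_cast at this
      linarith
    have h2 : α (2 * m) + 2 ≤ 3 * α (2 * m + 1) := by linarith
    have hf := hfpos m
    calc ((Finset.univ.filter (fun i : Fin n => lev i = m)).card : ℝ) * f m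
        ≤ (α (2 * m) + 2) * f m := mul_le_mul_of_nonneg_right h1 hf.le
      _ ≤ (3 * α (2 * m + 1)) * f m := mul_le_mul_of_nonneg_right h2 hf.le
      _ = 3 * g m := by rw [hg]; ring
  have himg : ∀ m ∈ Finset.image lev Finset.univ, r ≤ m := by
    intro m hm
    obtain ⟨i, _, hi⟩ := Finset.mem_image.mp hm
    have : r < lev i := lt_min (hfar _) (hfar _)
    omega
  have hadm' : Summable g := hadm
  calc G.floydLen f v γ = ∑ i : Fin n, f (lev i) := rfl
    _ = ∑ m ∈ Finset.image lev Finset.univ,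
          ((Finset.univ.filter (fun i : Fin n => lev i = m)).card) • f m :=
        Finset.sum_comp f lev
    _ ≤ ∑ m ∈ Finset.image lev Finset.univ, 3 * g m := Finset.sum_le_sum hterm
    _ = 3 * ∑ m ∈ Finset.image lev Finset.univ, g m := by rw [Finset.mul_sum]
    _ ≤ 3 * ∑' k, g (k + r) := by
        have := karlsson_tail_bound g hgpos hadm' r _ himg
        linarith
    _ < ε := by linarith
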